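/- Let f : ℍ∖ℝ → ℍ be such that for every I ∈ 𝕊 the map g_I(x,y) := f(x + yI) is twice continuously differentiable on ℝ×(0,∞) and satisfies the slice Cauchy–Riemann equation ∂g_I/∂x + I·∂g_I/∂y = 0 on ℝ×(0,∞) (I acting by left multiplication), i.e. f is slice regular on ℍ∖ℝ. Then (□f)(q) = 0 for every q ∈ ℍ∖ℝ. -/

import Mathlib

open MeasureTheory Quaternion

noncomputable section

/-- the sliced operator `□` at `q = x + yI`, `x = Re q`, `y = |Im q|`, `I = Im q/|Im q|`;
the partial derivatives of the slice function `g_I(x,y) = f(x + yI)` are taken through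
the one-variable sections. -/
def Box (f : ℍ[ℝ] → ℍ[ℝ]) (q : ℍ[ℝ]) : ℍ[ℝ] :=
  let x : ℝ := q.re
  let y : ℝ := ‖q.im‖
  let I : ℍ[ℝ] := ‖q.im‖⁻¹ • q.im
  (-(1 / 4 : ℝ)) • (deriv (deriv fun u : ℝ => f ((u : ℍ[ℝ]) + y • I)) x +
      deriv (deriv fun v : ℝ => f ((x : ℍ[ℝ]) + v • I)) y) +
    (1 / 2 : ℝ) • (x • deriv (fun u : ℝ => f ((u : ℍ[ℝ]) + y • I)) x +
      y • deriv (fun v : ℝ => f ((x : ℍ[ℝ]) + v • I)) y) +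
    (1 / 2 : ℝ) • (I * (x • deriv (fun v : ℝ => f ((x : ℍ[ℝ]) + v • I)) y -
      y • deriv (fun u : ℝ => f ((u : ℍ[ℝ]) + y • I)) x))

set_option maxHeartbeats 1000000 in
/-- If `f` is slice regular on `ℍ∖ℝ` (its slice sections are `C²` and
satisfy the slice Cauchy–Riemann equation `∂g_I/∂x + I·∂g_I/∂y = 0`), then `□f = 0` on
`ℍ∖ℝ`. -/
theorem stmt12 (f : ℍ[ℝ] → ℍ[ℝ])
    (hreg : ∀ I : ℍ[ℝ], I ^ 2 = -1 →
      ContDiffOn ℝ 2 (fun p : ℝ × ℝ => f ((p.1 : ℍ[ℝ]) + p.2 • I))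
          (Set.univ ×ˢ Set.Ioi 0) ∧
        ∀ x y : ℝ, 0 < y →
          deriv (fun u : ℝ => f ((u : ℍ[ℝ]) + y • I)) x +
              I * deriv (fun v : ℝ => f ((x : ℍ[ℝ]) + v • I)) y = 0)
    (q : ℍ[ℝ]) (hq : q.im ≠ 0) : Box f q = 0 := by
  have hy : (0:ℝ) < ‖q.im‖ := norm_pos_iff.mpr hq
  set x₀ : ℝ := q.re with hx₀def
  set y₀ : ℝ := ‖q.im‖ with hy₀def
  set I : ℍ[ℝ] := ‖q.im‖⁻¹ • q.im with hIdef
  have hI2 : I ^ 2 = -1 := by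
    have h : (‖q.im‖⁻¹ ^ 2 * (‖q.im‖ * ‖q.im‖) : ℝ) = 1 := by field_simp
    rw [hIdef, smul_pow, Quaternion.im_sq, normSq_eq_norm_mul_self, smul_neg,
      neg_eq_iff_eq_neg, neg_neg, ← Quaternion.coe_smul, smul_eq_mul, h, Quaternion.coe_one]
  have hII : I * I = -1 := by rw [← sq, hI2]
  obtain ⟨hC2, hCR⟩ := hreg I hI2
  set G : ℝ × ℝ → ℍ[ℝ] := fun p => f ((p.1 : ℍ[ℝ]) + p.2 • I) with hGdef
  have hopen : IsOpen ((Set.univ : Set ℝ) ×ˢ Set.Ioi (0:ℝ)) := isOpen_univ.prod isOpen_Ioi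
  have hat : ∀ p : ℝ × ℝ, 0 < p.2 → ContDiffAt ℝ 2 G p := fun p hp =>
    hC2.contDiffAt (hopen.mem_nhds (by simp [hp]))
  have hdiff : ∀ p : ℝ × ℝ, 0 < p.2 → DifferentiableAt ℝ G p := fun p hp =>
    (hat p hp).differentiableAt two_ne_zero
  set F' : ℝ × ℝ → ℝ × ℝ →L[ℝ] ℍ[ℝ] := fderiv ℝ G with hF'def
  have hF'd : DifferentiableAt ℝ F' (x₀, y₀) :=
    ((hat (x₀, y₀) hy).fderiv_right (m := 1) (le_refl 2)).differentiableAt one_ne_zero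
  set f'' : ℝ × ℝ →L[ℝ] ℝ × ℝ →L[ℝ] ℍ[ℝ] := fderiv ℝ F' (x₀, y₀) with hf''def
  have hev : ∀ᶠ p in nhds ((x₀ : ℝ), y₀), HasFDerivAt G (F' p) p := by
    filter_upwards [hopen.mem_nhds (by simp [hy] : ((x₀:ℝ), y₀) ∈ _)] with p hp
    exact (hdiff p hp.2).hasFDerivAt
  have hsymm : f'' (1,0) (0,1) = f'' (0,1) (1,0) :=
    second_derivative_symmetric_of_eventually hev hF'd.hasFDerivAt _ _
  -- first derivatives of sections
  have hAderiv : ∀ x y : ℝ, 0 < y →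
      HasDerivAt (fun u : ℝ => f ((u:ℍ[ℝ]) + y • I)) (F' (x,y) (1,0)) x := fun x y hy' =>
    (hdiff (x,y) hy').hasFDerivAt.comp_hasDerivAt (f := fun u : ℝ => (u, y)) x
      ((hasDerivAt_id x).prodMk (hasDerivAt_const x y))
  have hBderiv : ∀ x y : ℝ, 0 < y →
      HasDerivAt (fun v : ℝ => f ((x:ℍ[ℝ]) + v • I)) (F' (x,y) (0,1)) y := fun x y hy' =>
    (hdiff (x,y) hy').hasFDerivAt.comp_hasDerivAt y
      ((hasDerivAt_const y x).prodMk (hasDerivAt_id y))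
  have hA : ∀ x y : ℝ, 0 < y →
      deriv (fun u : ℝ => f ((u:ℍ[ℝ]) + y • I)) x = F' (x,y) (1,0) :=
    fun x y hy' => (hAderiv x y hy').deriv
  have hB : ∀ x y : ℝ, 0 < y →
      deriv (fun v : ℝ => f ((x:ℍ[ℝ]) + v • I)) y = F' (x,y) (0,1) :=
    fun x y hy' => (hBderiv x y hy').deriv
  -- CR at fderiv level
  have hCR' : ∀ x y : ℝ, 0 < y → F' (x,y) (1,0) = -(I * F' (x,y) (0,1)) := fun x y hy' => by
    have h := hCR x y hy'
    rw [hA x y hy', hB x y hy'] at h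
    exact eq_neg_of_add_eq_zero_left h
  have hCR'' : ∀ x y : ℝ, 0 < y → F' (x,y) (0,1) = I * F' (x,y) (1,0) := fun x y hy' => by
    rw [hCR' x y hy', mul_neg, ← mul_assoc, hII, neg_one_mul, neg_neg]
  -- second derivatives
  have hrow : HasDerivAt (fun u : ℝ => F' (u, y₀)) (f'' (1,0)) x₀ :=
    hF'd.hasFDerivAt.comp_hasDerivAt (E := ℝ × ℝ →L[ℝ] ℍ[ℝ]) (f := fun u : ℝ => (u, y₀)) x₀ ((hasDerivAt_id x₀).prodMk (hasDerivAt_const x₀ y₀))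
  have hcol : HasDerivAt (fun v : ℝ => F' (x₀, v)) (f'' (0,1)) y₀ :=
    hF'd.hasFDerivAt.comp_hasDerivAt (E := ℝ × ℝ →L[ℝ] ℍ[ℝ]) (f := fun v : ℝ => (x₀, v)) y₀ ((hasDerivAt_const y₀ x₀).prodMk (hasDerivAt_id y₀))
  have hBx : HasDerivAt (fun u : ℝ => F' (u, y₀) (0,1)) (f'' (1,0) (0,1)) x₀ := by
    simpa using hrow.clm_apply (hasDerivAt_const x₀ ((0:ℝ),(1:ℝ)))
  have hAy : HasDerivAt (fun v : ℝ => F' (x₀, v) (1,0)) (f'' (0,1) (1,0)) y₀ := by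
    simpa using hcol.clm_apply (hasDerivAt_const y₀ ((1:ℝ),(0:ℝ)))
  have e1 : deriv (deriv fun u : ℝ => f ((u:ℍ[ℝ]) + y₀ • I)) x₀ = -(I * f'' (1,0) (0,1)) := by
    have hfun : (deriv fun u : ℝ => f ((u:ℍ[ℝ]) + y₀ • I)) =
        fun u => -(I * F' (u, y₀) (0,1)) :=
      funext fun u => by rw [hA u y₀ hy, hCR' u y₀ hy]
    rw [hfun]
    exact ((hBx.const_mul I).neg).deriv
  have e2 : deriv (deriv fun v : ℝ => f ((x₀:ℍ[ℝ]) + v • I)) y₀ = I * f'' (0,1) (1,0) := by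
    have hfun : (deriv fun v : ℝ => f ((x₀:ℍ[ℝ]) + v • I)) =ᶠ[nhds y₀]
        fun v => I * F' (x₀, v) (1,0) := by
      filter_upwards [eventually_gt_nhds hy] with v hv
      rw [hB x₀ v hv, hCR'' x₀ v hv]
    rw [hfun.deriv_eq]
    exact (hAy.const_mul I).deriv
  -- now unfold Box
  show (-(1 / 4 : ℝ)) • (deriv (deriv fun u : ℝ => f ((u : ℍ[ℝ]) + y₀ • I)) x₀ +
      deriv (deriv fun v : ℝ => f ((x₀ : ℍ[ℝ]) + v • I)) y₀) +
    (1 / 2 : ℝ) • (x₀ • deriv (fun u : ℝ => f ((u : ℍ[ℝ]) + y₀ • I)) x₀ +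
      y₀ • deriv (fun v : ℝ => f ((x₀ : ℍ[ℝ]) + v • I)) y₀) +
    (1 / 2 : ℝ) • (I * (x₀ • deriv (fun v : ℝ => f ((x₀ : ℍ[ℝ]) + v • I)) y₀ -
      y₀ • deriv (fun u : ℝ => f ((u : ℍ[ℝ]) + y₀ • I)) x₀)) = 0
  rw [e1, e2, hsymm, hA x₀ y₀ hy, hB x₀ y₀ hy, hCR' x₀ y₀ hy]
  set b : ℍ[ℝ] := F' (x₀, y₀) (0,1)
  have hIIb : I * (I * b) = -b := by rw [← mul_assoc, hII, neg_one_mul]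
  simp only [neg_add_cancel, smul_zero, zero_add, smul_neg, sub_neg_eq_add, mul_add, mul_sub,
    mul_smul_comm, hIIb]
  module
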